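/- No strategyproof and anonymous mechanism achieves a bounded social cost approximation ratio, even for two agents and two facilities: for every real C > 0 there exists an environment with two facilities at ℓ_1 < ℓ_2 and building costs b_1, b_2 > 0 such that for every two-agent mechanism f : ℝ² → {1,2}² that is strategyproof and anonymous with respect to this environment, there exists a profile x ∈ ℝ² with SC(f(x)) ≥ C · OPT(x). -/

import Mathlib

/-- Number of agents assigned to facility `j` under assignment `s`
(two agents, two facilities; facility 1 is index `0`, facility 2 is index `1`). -/
def facCount (s : Fin 2 → Fin 2) (j : Fin 2) : ℕ :=
  (Finset.univ.filter fun i => s i = j).card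

/-- Cost of an agent with true position `y` under assignment `s`, being agent `i`. -/
noncomputable def agentCost (ℓ bc : Fin 2 → ℝ) (y : ℝ)
    (s : Fin 2 → Fin 2) (i : Fin 2) : ℝ :=
  |y - ℓ (s i)| + bc (s i) / (facCount s (s i) : ℝ)

/-- A two-agent mechanism is strategyproof if no agent can decrease her (true)
cost by misreporting her position. -/
def Strategyproof (ℓ bc : Fin 2 → ℝ)
    (f : (Fin 2 → ℝ) → Fin 2 → Fin 2) : Prop :=
  ∀ (x : Fin 2 → ℝ) (i : Fin 2) (xi' : ℝ),
    agentCost ℓ bc (x i) (f x) i ≤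
      agentCost ℓ bc (x i) (f (Function.update x i xi')) i

/-- A two-agent mechanism is anonymous: `f(x₂, x₁) = (f₂(x₁,x₂), f₁(x₁,x₂))`. -/
def Anonymous (f : (Fin 2 → ℝ) → Fin 2 → Fin 2) : Prop :=
  ∀ x₁ x₂ : ℝ,
    f ![x₂, x₁] 0 = f ![x₁, x₂] 1 ∧ f ![x₂, x₁] 1 = f ![x₁, x₂] 0

/-- Social cost of an assignment `s` with respect to the true profile `x`. -/
noncomputable def socialCost (ℓ bc : Fin 2 → ℝ) (x : Fin 2 → ℝ)
    (s : Fin 2 → Fin 2) : ℝ :=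
  ∑ i : Fin 2, agentCost ℓ bc (x i) s i

/-- Optimal (minimum) social cost over all four assignments. -/
noncomputable def OPT (ℓ bc : Fin 2 → ℝ) (x : Fin 2 → ℝ) : ℝ :=
  ⨅ s : Fin 2 → Fin 2, socialCost ℓ bc x s

/- ### Auxiliary lemmas -/

lemma fin2_cases : ∀ s : Fin 2 → Fin 2,
    s = ![0,0] ∨ s = ![0,1] ∨ s = ![1,0] ∨ s = ![1,1] := by decide

lemma upd_zero (a c a' : ℝ) : Function.update ![a,c] 0 a' = ![a',c] := by
  funext i; fin_cases i <;> simp [Function.update]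

lemma upd_one (a c c' : ℝ) : Function.update ![a,c] 1 c' = ![a,c'] := by
  funext i; fin_cases i <;> simp [Function.update]

lemma ac00 (b y : ℝ) (i : Fin 2) :
    agentCost ![0,1] ![b,b] y ![0,0] i = |y| + b/2 := by
  fin_cases i <;> simp [agentCost, facCount] <;> rfl

lemma ac11 (b y : ℝ) (i : Fin 2) :
    agentCost ![0,1] ![b,b] y ![1,1] i = |y-1| + b/2 := by
  fin_cases i <;> simp [agentCost, facCount] <;> rfl

lemma ac01_0 (b y : ℝ) : agentCost ![0,1] ![b,b] y ![0,1] 0 = |y| + b := by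
  simp [agentCost, show facCount ![0,1] (0:Fin 2) = 1 from by decide]

lemma ac01_1 (b y : ℝ) : agentCost ![0,1] ![b,b] y ![0,1] 1 = |y-1| + b := by
  simp [agentCost, show facCount ![0,1] (1:Fin 2) = 1 from by decide]

lemma ac10_0 (b y : ℝ) : agentCost ![0,1] ![b,b] y ![1,0] 0 = |y-1| + b := by
  simp [agentCost, show facCount ![1,0] (1:Fin 2) = 1 from by decide]

lemma ac10_1 (b y : ℝ) : agentCost ![0,1] ![b,b] y ![1,0] 1 = |y| + b := by
  simp [agentCost, show facCount ![1,0] (0:Fin 2) = 1 from by decide]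

lemma sc_eval (b : ℝ) (x : Fin 2 → ℝ) (s : Fin 2 → Fin 2) :
    socialCost ![0,1] ![b,b] x s =
      agentCost ![0,1] ![b,b] (x 0) s 0 + agentCost ![0,1] ![b,b] (x 1) s 1 := by
  simp [socialCost, Fin.sum_univ_two]

lemma opt_le (b : ℝ) (x : Fin 2 → ℝ) (s : Fin 2 → Fin 2) :
    OPT ![0,1] ![b,b] x ≤ socialCost ![0,1] ![b,b] x s :=
  ciInf_le (Set.Finite.bddBelow (Set.finite_range _)) s

lemma opt_nonneg (b : ℝ) (hb : 0 ≤ b) (x : Fin 2 → ℝ) :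
    0 ≤ OPT ![0,1] ![b,b] x := by
  refine le_ciInf fun s => ?_
  rcases fin2_cases s with h|h|h|h <;> subst h <;>
    rw [sc_eval] <;>
    simp only [ac00, ac11, ac01_0, ac01_1, ac10_0, ac10_1] <;>
    have := abs_nonneg (x 0 - 1) <;> have := abs_nonneg (x 1 - 1) <;>
    have := abs_nonneg (x 0) <;> have := abs_nonneg (x 1) <;> linarith

/-- No strategyproof and anonymous mechanism has a bounded social cost
approximation ratio, even for two agents and two facilities: for every `C > 0`
there is an environment such that every strategyproof and anonymous mechanism
admits a profile on which its social cost is at least `C` times the optimum. -/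
theorem no_bounded_approximation (C : ℝ) (hC : 0 < C) :
    ∃ ℓ bc : Fin 2 → ℝ, ℓ 0 < ℓ 1 ∧ (∀ j, 0 < bc j) ∧
      ∀ f : (Fin 2 → ℝ) → Fin 2 → Fin 2,
        Strategyproof ℓ bc f → Anonymous f →
        ∃ x : Fin 2 → ℝ, C * OPT ℓ bc x ≤ socialCost ℓ bc x (f x) := by
  have hK2 : (2:ℝ) ≤ max C 2 := le_max_right _ _
  have hCK : C ≤ max C 2 := le_max_left _ _
  set K : ℝ := max C 2 with hKdef
  have hKpos : (0:ℝ) < K := by linarith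
  set b : ℝ := 1/(8*K) with hbdef
  have hb : 0 < b := by rw [hbdef]; positivity
  have hKne : K ≠ 0 := ne_of_gt hKpos
  have hKb : K * b = 1/8 := by rw [hbdef]; field_simp
  have hb16 : b ≤ 1/16 := by
    rw [hbdef, div_le_div_iff₀ (by linarith) (by norm_num)]
    linarith
  set y1 : ℝ := 1/2 + b/8 with hy1def
  set y2 : ℝ := 1/2 - b/8 with hy2def
  have hy1a : |y1| = y1 := abs_of_nonneg (by rw [hy1def]; linarith)
  have hy1b : |y1 - 1| = 1 - y1 := by
    rw [abs_of_nonpos (by rw [hy1def]; linarith)]; ring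
  have hy2a : |y2| = y2 := abs_of_nonneg (by rw [hy2def]; linarith)
  have hy2b : |y2 - 1| = 1 - y2 := by
    rw [abs_of_nonpos (by rw [hy2def]; linarith)]; ring
  refine ⟨![0,1], ![b,b], by norm_num, fun j => by fin_cases j <;> simpa, ?_⟩
  intro f hSP hAn
  by_contra hcon
  push_neg at hcon
  have h' : ∀ x : Fin 2 → ℝ,
      socialCost ![0,1] ![b,b] x (f x) < K * OPT ![0,1] ![b,b] x := fun x =>
    lt_of_lt_of_le (hcon x)
      (mul_le_mul_of_nonneg_right hCK (opt_nonneg b hb.le x))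
  -- approximation forcing at (0,0)
  have F00 : f ![0,0] = ![0,0] := by
    have h := h' ![0,0]
    have hopt : OPT ![0,1] ![b,b] ![0,0] ≤ b := by
      have h2 := opt_le b ![0,0] ![0,0]
      rw [sc_eval] at h2
      simp only [Matrix.cons_val_zero, Matrix.cons_val_one, Matrix.head_cons] at h2
      rw [ac00, ac00, abs_zero] at h2
      linarith
    have hK8 : K * OPT ![0,1] ![b,b] ![0,0] ≤ 1/8 :=
      hKb ▸ mul_le_mul_of_nonneg_left hopt hKpos.le
    rcases fin2_cases (f ![0,0]) with hf|hf|hf|hf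
    · exact hf
    · rw [hf, sc_eval] at h
      simp only [Matrix.cons_val_zero, Matrix.cons_val_one, Matrix.head_cons] at h
      rw [ac01_0, ac01_1] at h
      norm_num at h
      linarith
    · rw [hf, sc_eval] at h
      simp only [Matrix.cons_val_zero, Matrix.cons_val_one, Matrix.head_cons] at h
      rw [ac10_0, ac10_1] at h
      norm_num at h
      linarith
    · rw [hf, sc_eval] at h
      simp only [Matrix.cons_val_zero, Matrix.cons_val_one, Matrix.head_cons] at h
      rw [ac11, ac11] at h
      norm_num at h
      linarith
  -- approximation forcing at (1,1)
  have F11 : f ![1,1] = ![1,1] := by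
    have h := h' ![1,1]
    have hopt : OPT ![0,1] ![b,b] ![1,1] ≤ b := by
      have h2 := opt_le b ![1,1] ![1,1]
      rw [sc_eval] at h2
      simp only [Matrix.cons_val_zero, Matrix.cons_val_one, Matrix.head_cons] at h2
      rw [ac11, ac11] at h2
      norm_num at h2
      linarith
    have hK8 : K * OPT ![0,1] ![b,b] ![1,1] ≤ 1/8 :=
      hKb ▸ mul_le_mul_of_nonneg_left hopt hKpos.le
    rcases fin2_cases (f ![1,1]) with hf|hf|hf|hf
    · rw [hf, sc_eval] at h
      simp only [Matrix.cons_val_zero, Matrix.cons_val_one, Matrix.head_cons] at h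
      rw [ac00, ac00] at h
      norm_num at h
      linarith
    · rw [hf, sc_eval] at h
      simp only [Matrix.cons_val_zero, Matrix.cons_val_one, Matrix.head_cons] at h
      rw [ac01_0, ac01_1] at h
      norm_num at h
      linarith
    · rw [hf, sc_eval] at h
      simp only [Matrix.cons_val_zero, Matrix.cons_val_one, Matrix.head_cons] at h
      rw [ac10_0, ac10_1] at h
      norm_num at h
      linarith
    · exact hf
  -- approximation forcing at (0,1)
  have F01 : f ![0,1] = ![0,1] := by
    have h := h' ![0,1]
    have hopt : OPT ![0,1] ![b,b] ![0,1] ≤ 2*b := by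
      have h2 := opt_le b ![0,1] ![0,1]
      rw [sc_eval] at h2
      simp only [Matrix.cons_val_zero, Matrix.cons_val_one, Matrix.head_cons] at h2
      rw [ac01_0, ac01_1] at h2
      norm_num at h2
      linarith
    have hK4 : K * OPT ![0,1] ![b,b] ![0,1] ≤ 1/4 := by
      have := mul_le_mul_of_nonneg_left hopt hKpos.le
      nlinarith
    rcases fin2_cases (f ![0,1]) with hf|hf|hf|hf
    · rw [hf, sc_eval] at h
      simp only [Matrix.cons_val_zero, Matrix.cons_val_one, Matrix.head_cons] at h
      rw [ac00, ac00] at h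
      norm_num at h
      linarith
    · exact hf
    · rw [hf, sc_eval] at h
      simp only [Matrix.cons_val_zero, Matrix.cons_val_one, Matrix.head_cons] at h
      rw [ac10_0, ac10_1] at h
      norm_num at h
      linarith
    · rw [hf, sc_eval] at h
      simp only [Matrix.cons_val_zero, Matrix.cons_val_one, Matrix.head_cons] at h
      rw [ac11, ac11] at h
      norm_num at h
      linarith
  -- strategyproofness forcing at (0, y1)
  have F0y1 : f ![0,y1] = ![0,0] := by
    rcases fin2_cases (f ![0,y1]) with hf|hf|hf|hf
    · exact hf
    · have h := hSP ![0,y1] 1 0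
      rw [upd_one, F00, hf] at h
      simp only [Matrix.cons_val_one, Matrix.head_cons, Matrix.cons_val_zero] at h
      rw [ac01_1, ac00, hy1b, hy1a] at h
      rw [hy1def] at h; linarith
    · have h := hSP ![0,y1] 1 0
      rw [upd_one, F00, hf] at h
      simp only [Matrix.cons_val_one, Matrix.head_cons, Matrix.cons_val_zero] at h
      rw [ac10_1, ac00, hy1a] at h
      linarith
    · have h := hSP ![0,1] 1 y1
      rw [upd_one, F01, hf] at h
      simp only [Matrix.cons_val_one, Matrix.head_cons] at h
      rw [ac01_1, ac11] at h
      norm_num at h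
      linarith
  -- strategyproofness forcing at (0, y2)
  have F0y2 : f ![0,y2] = ![0,0] := by
    rcases fin2_cases (f ![0,y2]) with hf|hf|hf|hf
    · exact hf
    · have h := hSP ![0,y2] 1 0
      rw [upd_one, F00, hf] at h
      simp only [Matrix.cons_val_one, Matrix.head_cons, Matrix.cons_val_zero] at h
      rw [ac01_1, ac00, hy2b, hy2a] at h
      rw [hy2def] at h; linarith
    · have h := hSP ![0,y2] 1 0
      rw [upd_one, F00, hf] at h
      simp only [Matrix.cons_val_one, Matrix.head_cons, Matrix.cons_val_zero] at h
      rw [ac10_1, ac00, hy2a] at h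
      linarith
    · have h := hSP ![0,1] 1 y2
      rw [upd_one, F01, hf] at h
      simp only [Matrix.cons_val_one, Matrix.head_cons] at h
      rw [ac01_1, ac11] at h
      norm_num at h
      linarith
  -- anonymity: (y2, 0)
  have Fy20 : f ![y2,0] = ![0,0] := by
    obtain ⟨h1, h2⟩ := hAn 0 y2
    rw [F0y2] at h1 h2
    funext i; fin_cases i
    · simpa using h1
    · simpa using h2
  -- strategyproofness forcing at (y2, 1)
  have Fy21 : f ![y2,1] = ![1,1] := by
    rcases fin2_cases (f ![y2,1]) with hf|hf|hf|hf
    · have h := hSP ![0,1] 0 y2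
      rw [upd_zero, F01, hf] at h
      simp only [Matrix.cons_val_zero] at h
      rw [ac01_0, ac00, abs_zero] at h
      linarith
    · have h := hSP ![y2,1] 0 1
      rw [upd_zero, F11, hf] at h
      simp only [Matrix.cons_val_zero] at h
      rw [ac01_0, ac11, hy2a, hy2b] at h
      rw [hy2def] at h; linarith
    · have h := hSP ![y2,1] 0 1
      rw [upd_zero, F11, hf] at h
      simp only [Matrix.cons_val_zero] at h
      rw [ac10_0, ac11, hy2b] at h
      linarith
    · exact hf
  -- anonymity + strategyproofness at the diagonal (y2, y2)
  have Fy2y2 : f ![y2,y2] = ![0,0] := by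
    obtain ⟨h1, h2⟩ := hAn y2 y2
    rcases fin2_cases (f ![y2,y2]) with hf|hf|hf|hf
    · exact hf
    · rw [hf] at h1; simp at h1
    · rw [hf] at h1; simp at h1
    · have h := hSP ![y2,y2] 1 0
      rw [upd_one, Fy20, hf] at h
      simp only [Matrix.cons_val_one, Matrix.head_cons, Matrix.cons_val_zero] at h
      rw [ac11, ac00, hy2a, hy2b] at h
      rw [hy2def] at h; linarith
  -- final contradiction at (y2, y1)
  rcases fin2_cases (f ![y2,y1]) with hf|hf|hf|hf
  · have h := hSP ![y2,y1] 1 1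
    rw [upd_one, Fy21, hf] at h
    simp only [Matrix.cons_val_one, Matrix.head_cons, Matrix.cons_val_zero] at h
    rw [ac00, ac11, hy1a, hy1b] at h
    rw [hy1def] at h; linarith
  · have h := hSP ![y2,y1] 0 0
    rw [upd_zero, F0y1, hf] at h
    simp only [Matrix.cons_val_zero] at h
    rw [ac01_0, ac00, hy2a] at h
    linarith
  · have h := hSP ![y2,y1] 1 y2
    rw [upd_one, Fy2y2, hf] at h
    simp only [Matrix.cons_val_one, Matrix.head_cons, Matrix.cons_val_zero] at h
    rw [ac10_1, ac00, hy1a] at h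
    linarith
  · have h := hSP ![y2,y1] 0 0
    rw [upd_zero, F0y1, hf] at h
    simp only [Matrix.cons_val_zero] at h
    rw [ac11, ac00, hy2a, hy2b] at h
    rw [hy2def] at h; linarith
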